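/- arXiv:2403.16624 — 8 statements merged into one kernel-verified Lean document; each statement's English description precedes it below -/
import Mathlib

section
/- Let $1<p<\infty$, $\ell\ge 0$, and let $h:\mathbb{R}\to\mathbb{R}$ be a $C^1$ convex function. Define $\xi_{p,\ell}(t)=(\ell+t^2)^{(p-2)/2}t$. Then for all real $a\ne b$ and all $\alpha,\beta\ge 0$, $$|a-b|^{p-2}(a-b)\big[\alpha\,\xi_{p,\ell}(h'(a))-\beta\,\xi_{p,\ell}(h'(b))\big]\ \ge\ \big(\ell(a-b)^2+(h(a)-h(b))^2\big)^{(p-2)/2}\,(h(a)-h(b))\,(\alpha-\beta).$$ -/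
open Real

/-- Gradient inequality for a convex differentiable function on ℝ. -/
lemma grad_ineq (h : ℝ → ℝ) (hconv : ConvexOn ℝ Set.univ h)
    (hd : ∀ x, DifferentiableAt ℝ h x) (x y : ℝ) :
    deriv h x * (y - x) ≤ h y - h x := by
  rcases lt_trichotomy x y with hxy | rfl | hxy
  · have h1 := hconv.deriv_le_slope (Set.mem_univ x) (Set.mem_univ y) hxy (hd x)
    rw [slope_def_field] at h1
    have := (le_div_iff₀ (show (0:ℝ) < y - x by linarith)).mp h1
    linarith
  · simp
  · have h1 := hconv.slope_le_deriv (Set.mem_univ y) (Set.mem_univ x) hxy (hd x)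
    rw [slope_comm, slope_def_field] at h1
    have hyx : y - x < 0 := by linarith
    have := (div_le_iff_of_neg hyx).mp h1
    linarith

lemma phi_mono_nonneg (p c : ℝ) (hp : 1 < p) (hc : 0 ≤ c)
    (u v : ℝ) (hv : 0 ≤ v) (hvu : v ≤ u) :
    (c + v^2) ^ ((p-2)/2) * v ≤ (c + u^2) ^ ((p-2)/2) * u := by
  have hu : 0 ≤ u := hv.trans hvu
  rcases le_or_gt 2 p with hp2 | hp2
  · have hq : 0 ≤ (p-2)/2 := by linarith
    refine mul_le_mul (Real.rpow_le_rpow (by positivity) (by nlinarith) hq) hvu hv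
      (Real.rpow_nonneg (by positivity) _)
  · rcases eq_or_lt_of_le hv with rfl | hv'
    · simp only [mul_zero]
      exact mul_nonneg (Real.rpow_nonneg (by positivity) _) hu
    · -- 0 < v ≤ u
      have hu' : 0 < u := lt_of_lt_of_le hv' hvu
      set r : ℝ := (2-p)/2 with hrdef
      have hr : 0 < r := by rw [hrdef]; linarith
      have hr1 : 2 * r < 1 := by rw [hrdef]; linarith
      have hcv : 0 < c + v^2 := by positivity
      have hcu : 0 < c + u^2 := by positivity
      have key : v * (c + u^2) ^ r ≤ u * (c + v^2) ^ r := by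
        have h1 : (c + u^2) * v^2 ≤ (c + v^2) * u^2 := by
          nlinarith [mul_le_mul_of_nonneg_left (pow_le_pow_left₀ hv hvu 2) hc]
        have h2 : ((c + u^2) * v^2) ^ r ≤ ((c + v^2) * u^2) ^ r :=
          Real.rpow_le_rpow (by positivity) h1 hr.le
        rw [Real.mul_rpow hcu.le (by positivity), Real.mul_rpow hcv.le (by positivity)] at h2
        have hv2 : (v^2 : ℝ) ^ r = v ^ (2*r) := by
          rw [← Real.rpow_natCast v 2, ← Real.rpow_mul hv]; norm_num
        have hu2 : (u^2 : ℝ) ^ r = u ^ (2*r) := by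
          rw [← Real.rpow_natCast u 2, ← Real.rpow_mul hu]; norm_num
        rw [hv2, hu2] at h2
        have h3 : v ^ (1 - 2*r) ≤ u ^ (1 - 2*r) :=
          Real.rpow_le_rpow hv hvu (by linarith)
        have h4 : (c + u^2) ^ r * v ^ (2*r) * v ^ (1 - 2*r) ≤
            (c + v^2) ^ r * u ^ (2*r) * u ^ (1 - 2*r) :=
          mul_le_mul h2 h3 (Real.rpow_nonneg hv _)
            (mul_nonneg (Real.rpow_nonneg hcv.le _) (Real.rpow_nonneg hu _))
        rw [mul_assoc, mul_assoc, ← Real.rpow_add hv', ← Real.rpow_add hu'] at h4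
        norm_num at h4
        linarith [h4]
      have hq : (p-2)/2 = -r := by rw [hrdef]; ring
      rw [hq, Real.rpow_neg hcv.le, Real.rpow_neg hcu.le]
      rw [mul_comm ((c + v^2)^r)⁻¹ v, mul_comm ((c + u^2)^r)⁻¹ u,
        ← div_eq_mul_inv, ← div_eq_mul_inv,
        div_le_div_iff₀ (Real.rpow_pos_of_pos hcv _) (Real.rpow_pos_of_pos hcu _)]
      linarith [key]

lemma phi_mono (p c : ℝ) (hp : 1 < p) (hc : 0 ≤ c)
    (u v : ℝ) (hvu : v ≤ u) :
    (c + v^2) ^ ((p-2)/2) * v ≤ (c + u^2) ^ ((p-2)/2) * u := by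
  rcases le_or_gt 0 v with hv | hv
  · exact phi_mono_nonneg p c hp hc u v hv hvu
  rcases le_or_gt u 0 with hu | hu
  · have := phi_mono_nonneg p c hp hc (-v) (-u) (by linarith) (by linarith)
    simp only [neg_sq] at this
    nlinarith [this]
  · have l1 : (c + v^2) ^ ((p-2)/2) * v ≤ 0 :=
      mul_nonpos_of_nonneg_of_nonpos (Real.rpow_nonneg (by positivity) _) hv.le
    have l2 : 0 ≤ (c + u^2) ^ ((p-2)/2) * u :=
      mul_nonneg (Real.rpow_nonneg (by positivity) _) hu.le
    linarith

theorem stmt0 (p ℓ : ℝ) (hp : 1 < p) (hℓ : 0 ≤ ℓ)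
    (h : ℝ → ℝ) (hconv : ConvexOn ℝ Set.univ h) (hC1 : ContDiff ℝ 1 h)
    (ξ : ℝ → ℝ) (hξ : ∀ t, ξ t = (ℓ + t ^ 2) ^ ((p - 2) / 2) * t)
    (a b α β : ℝ) (hab : a ≠ b) (hα : 0 ≤ α) (hβ : 0 ≤ β) :
    (ℓ * (a - b) ^ 2 + (h a - h b) ^ 2) ^ ((p - 2) / 2) * (h a - h b) * (α - β) ≤
      |a - b| ^ (p - 2) * (a - b) * (α * ξ (deriv h a) - β * ξ (deriv h b)) := by
  have hd : ∀ x, DifferentiableAt ℝ h x := fun x =>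
    (hC1.differentiable one_ne_zero).differentiableAt
  set d : ℝ := a - b with hd'
  set D : ℝ := h a - h b with hD'
  have hdne : d ≠ 0 := sub_ne_zero.mpr hab
  -- gradient inequalities
  have g1 : deriv h a * (b - a) ≤ h b - h a := grad_ineq h hconv hd a b
  have g2 : deriv h b * (a - b) ≤ h a - h b := grad_ineq h hconv hd b a
  have hub : d * deriv h b ≤ D := by rw [hd', hD']; nlinarith [g2]
  have hua : D ≤ d * deriv h a := by rw [hd', hD']; nlinarith [g1]
  -- key identity : |d|^(p-2) * d * ξ t = (ℓ*d^2 + (d*t)^2)^((p-2)/2) * (d*t)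
  have hident : ∀ t : ℝ, |d| ^ (p-2) * d * ξ t =
      (ℓ * d^2 + (d*t)^2) ^ ((p-2)/2) * (d*t) := by
    intro t
    rw [hξ t]
    have h1 : |d| ^ (p-2) = (d^2 : ℝ) ^ ((p-2)/2) := by
      rw [← sq_abs d, ← Real.rpow_natCast |d| 2, ← Real.rpow_mul (abs_nonneg d)]
      congr 1
      push_cast
      ring
    have h2 : (ℓ * d^2 + (d*t)^2 : ℝ) = d^2 * (ℓ + t^2) := by ring
    rw [h1, h2, Real.mul_rpow (by positivity) (by positivity)]
    ring
  set q : ℝ := (p-2)/2 with hq'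
  set c : ℝ := ℓ * d^2 with hc'
  have hc0 : 0 ≤ c := by positivity
  have m1 : (c + D^2) ^ q * D ≤ (c + (d * deriv h a)^2) ^ q * (d * deriv h a) :=
    phi_mono p c hp hc0 _ _ hua
  have m2 : (c + (d * deriv h b)^2) ^ q * (d * deriv h b) ≤ (c + D^2) ^ q * D :=
    phi_mono p c hp hc0 _ _ hub
  have e1 : |d| ^ (p-2) * d * ξ (deriv h a) = (c + (d * deriv h a)^2) ^ q * (d * deriv h a) :=
    hident (deriv h a)
  have e2 : |d| ^ (p-2) * d * ξ (deriv h b) = (c + (d * deriv h b)^2) ^ q * (d * deriv h b) :=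
    hident (deriv h b)
  have expand : |d| ^ (p-2) * d * (α * ξ (deriv h a) - β * ξ (deriv h b)) =
      α * (|d| ^ (p-2) * d * ξ (deriv h a)) - β * (|d| ^ (p-2) * d * ξ (deriv h b)) := by ring
  calc (c + D ^ 2) ^ q * D * (α - β)
      = α * ((c + D^2) ^ q * D) - β * ((c + D^2) ^ q * D) := by ring
    _ ≤ α * ((c + (d * deriv h a)^2) ^ q * (d * deriv h a))
        - β * ((c + (d * deriv h b)^2) ^ q * (d * deriv h b)) := by
        have := mul_le_mul_of_nonneg_left m1 hα
        have := mul_le_mul_of_nonneg_left m2 hβ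
        nlinarith [mul_le_mul_of_nonneg_left m1 hα, mul_le_mul_of_nonneg_left m2 hβ]
    _ = |d| ^ (p-2) * d * (α * ξ (deriv h a) - β * ξ (deriv h b)) := by
        rw [expand, e1, e2]
end

section
/- Let $1<p<\infty$ and let $h:\mathbb{R}\to\mathbb{R}$ be a $C^1$ function with $h'\ge 0$. Define $H(t)=\int_0^t h'(\sigma)^{1/p}\,d\sigma$. Then for all $a,b\in\mathbb{R}$, $$|a-b|^{p-2}(a-b)\,(h(a)-h(b))\ \ge\ |H(a)-H(b)|^p.$$ -/
open Real MeasureTheory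

private theorem stmt1_aux (p : ℝ) (hp : 1 < p) (h : ℝ → ℝ) (hC1 : ContDiff ℝ 1 h)
    (hd : ∀ t, 0 ≤ deriv h t)
    (H : ℝ → ℝ) (hH : ∀ t, H t = ∫ σ in (0:ℝ)..t, (deriv h σ) ^ (1 / p))
    (a b : ℝ) (hba : b ≤ a) :
    |H a - H b| ^ p ≤ |a - b| ^ (p - 2) * (a - b) * (h a - h b) := by
  have hp0 : (0:ℝ) < p := lt_trans one_pos hp
  rcases eq_or_lt_of_le hba with heq | hlt
  · subst heq
    simp [Real.zero_rpow hp0.ne']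
  set f : ℝ → ℝ := fun σ => (deriv h σ) ^ (1 / p) with hf_def
  have hderivc : Continuous (deriv h) := (hC1.continuous_deriv le_rfl)
  have hfc : Continuous f :=
    hderivc.rpow_const (fun x => Or.inr (by positivity))
  have hfnn : ∀ σ, 0 ≤ f σ := fun σ => Real.rpow_nonneg (hd σ) _
  have hHab : H a - H b = ∫ σ in b..a, f σ := by
    rw [hH a, hH b,
      intervalIntegral.integral_interval_sub_left (hfc.intervalIntegrable 0 a)
        (hfc.intervalIntegrable 0 b)]
  have hInn : 0 ≤ ∫ σ in b..a, f σ :=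
    intervalIntegral.integral_nonneg hba fun x _ => hfnn x
  -- FTC
  have hftc : ∫ σ in b..a, deriv h σ = h a - h b :=
    intervalIntegral.integral_deriv_eq_sub
      (fun x _ => (hC1.differentiable one_ne_zero).differentiableAt)
      (hderivc.intervalIntegrable _ _)
  have hhab : 0 ≤ h a - h b := by
    rw [← hftc]
    exact intervalIntegral.integral_nonneg hba fun x _ => hd x
  -- Hölder
  set q : ℝ := p / (p - 1) with hq_def
  have hpq : p.HolderConjugate q := Real.HolderConjugate.conjExponent hp
  set μ : Measure ℝ := volume.restrict (Set.Ioc b a) with hμ_def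
  haveI : IsFiniteMeasure μ := ⟨by
    rw [Measure.restrict_apply_univ]; exact measure_Ioc_lt_top⟩
  obtain ⟨C, hC⟩ := IsCompact.exists_bound_of_continuousOn (isCompact_Icc (a := b) (b := a))
    hfc.continuousOn
  have hfmem : MemLp f (ENNReal.ofReal p) μ :=
    MemLp.of_bound (hfc.aestronglyMeasurable.restrict) C
      ((ae_restrict_iff' measurableSet_Ioc).2
        (Filter.Eventually.of_forall fun x hx => hC x (Set.Ioc_subset_Icc_self hx)))
  have hgmem : MemLp (fun _ : ℝ => (1:ℝ)) (ENNReal.ofReal q) μ := memLp_const 1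
  have holder := MeasureTheory.integral_mul_le_Lp_mul_Lq_of_nonneg hpq
    (Filter.Eventually.of_forall fun x => hfnn x)
    (Filter.Eventually.of_forall fun _ => (zero_le_one)) hfmem hgmem
  simp only [mul_one, Real.one_rpow] at holder
  have h1 : ∫ x, f x ∂μ = ∫ σ in b..a, f σ := by
    rw [intervalIntegral.integral_of_le hba]
  have h2 : ∫ x, f x ^ p ∂μ = h a - h b := by
    have : ∀ x, f x ^ p = deriv h x := by
      intro x
      rw [hf_def, one_div, Real.rpow_inv_rpow (hd x) hp0.ne']
    simp_rw [this]
    rw [← hftc, intervalIntegral.integral_of_le hba]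
  have h3 : ∫ _x, (1:ℝ) ∂μ = a - b := by
    rw [integral_const, hμ_def, measureReal_def, Measure.restrict_apply_univ, Real.volume_Ioc, smul_eq_mul,
      mul_one, ENNReal.toReal_ofReal (by linarith)]
  rw [h1, h2, h3] at holder
  -- raise to power p
  have habpos : (0:ℝ) < a - b := by linarith
  have key : (∫ σ in b..a, f σ) ^ p ≤ (h a - h b) * (a - b) ^ (p - 1) := by
    calc (∫ σ in b..a, f σ) ^ p
        ≤ ((h a - h b) ^ (1 / p) * (a - b) ^ (1 / q)) ^ p :=
          Real.rpow_le_rpow hInn holder hp0.le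
      _ = (h a - h b) * (a - b) ^ (p - 1) := by
          rw [Real.mul_rpow (Real.rpow_nonneg hhab _) (Real.rpow_nonneg habpos.le _),
            one_div, Real.rpow_inv_rpow hhab hp0.ne', ← Real.rpow_mul habpos.le]
          congr 1
          rw [hq_def]
          field_simp
  have habs : |a - b| = a - b := abs_of_pos habpos
  have hpow : (a - b) ^ (p - 2) * (a - b) = (a - b) ^ (p - 1) := by
    rw [← Real.rpow_add_one habpos.ne' (p - 2)]
    congr 1
    ring
  rw [hHab, abs_of_nonneg hInn, habs, hpow, mul_comm]
  exact key

theorem stmt1 (p : ℝ) (hp : 1 < p) (h : ℝ → ℝ) (hC1 : ContDiff ℝ 1 h)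
    (hd : ∀ t, 0 ≤ deriv h t)
    (H : ℝ → ℝ) (hH : ∀ t, H t = ∫ σ in (0:ℝ)..t, (deriv h σ) ^ (1 / p))
    (a b : ℝ) :
    |H a - H b| ^ p ≤ |a - b| ^ (p - 2) * (a - b) * (h a - h b) := by
  rcases le_total b a with hba | hab
  · exact stmt1_aux p hp h hC1 hd H hH a b hba
  · have := stmt1_aux p hp h hC1 hd H hH b a hab
    have e1 : |H a - H b| = |H b - H a| := abs_sub_comm _ _
    have e2 : |a - b| = |b - a| := abs_sub_comm _ _
    rw [e1, e2]
    calc |H b - H a| ^ p ≤ |b - a| ^ (p - 2) * (b - a) * (h b - h a) := this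
      _ = |b - a| ^ (p - 2) * (a - b) * (h a - h b) := by ring
end

section
/- For all real numbers $a,b\ge 0$ and every $\gamma>1$, $$(a^{\gamma}-b^{\gamma})^2\ \le\ \frac{\gamma^2}{2\gamma-1}\,(a-b)\,(a^{2\gamma-1}-b^{2\gamma-1}).$$ -/
open Real

lemma bern {b x p : ℝ} (hb : 0 ≤ b) (hbx : b ≤ x) (hp : 1 ≤ p) :
    x ^ p - b ^ p ≤ p * x ^ (p - 1) * (x - b) := by
  rcases eq_or_lt_of_le (hb.trans hbx) with hx | hx
  · have hb0 : b = 0 := le_antisymm (hbx.trans hx.ge) hb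
    simp [← hx, hb0]
  · have hs : (-1 : ℝ) ≤ b / x - 1 := by
      have : 0 ≤ b / x := div_nonneg hb hx.le
      linarith
    have h := one_add_mul_self_le_rpow_one_add hs hp
    rw [add_sub_cancel] at h
    have hdiv : (b / x) ^ p = b ^ p / x ^ p := Real.div_rpow hb hx.le p
    rw [hdiv] at h
    have hxp : 0 < x ^ p := Real.rpow_pos_of_pos hx p
    have hxe : x ^ p = x ^ (p - 1) * x := by
      rw [← Real.rpow_add_one hx.ne']; ring_nf
    have h2 := (mul_le_mul_iff_of_pos_right hxp).mpr h
    rw [div_mul_cancel₀ _ hxp.ne'] at h2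
    have hbx' : (b / x) * x ^ p = b * x ^ (p - 1) := by
      rw [hxe]; field_simp
    nlinarith [h2, hxp]

lemma main_pos (a b γ : ℝ) (hb : 0 < b) (hba : b ≤ a) (hγ : 1 < γ) :
    (a ^ γ - b ^ γ) ^ 2 ≤
      γ ^ 2 / (2 * γ - 1) * ((a - b) * (a ^ (2 * γ - 1) - b ^ (2 * γ - 1))) := by
  set c : ℝ := γ ^ 2 / (2 * γ - 1) with hc
  have h2γ : (0:ℝ) < 2 * γ - 1 := by linarith
  set F : ℝ → ℝ := fun x => c * ((x - b) * (x ^ (2*γ-1) - b ^ (2*γ-1))) - (x ^ γ - b ^ γ) ^ 2 with hF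
  set G : ℝ → ℝ := fun x =>
      c * ((x ^ (2*γ-1) - b ^ (2*γ-1)) + (x - b) * ((2*γ-1) * x ^ (2*γ-2)))
        - 2 * ((x ^ γ - b ^ γ) * (γ * x ^ (γ-1))) with hG
  -- derivative of F is G on (0, ∞)
  have hFd : ∀ x : ℝ, 0 < x → HasDerivAt F (G x) x := by
    intro x hx
    have d1 : HasDerivAt (fun y : ℝ => y ^ (2*γ-1)) ((2*γ-1) * x ^ (2*γ-2)) x := by
      have := Real.hasDerivAt_rpow_const (x := x) (p := 2*γ-1) (Or.inl hx.ne')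
      convert this using 2; ring
    have d2 : HasDerivAt (fun y : ℝ => y ^ γ) (γ * x ^ (γ-1)) x :=
      Real.hasDerivAt_rpow_const (Or.inl hx.ne')
    have dF := ((((hasDerivAt_id x).sub_const b).mul
        (d1.sub_const (b ^ (2*γ-1)))).const_mul c).sub
      ((d2.sub_const (b ^ γ)).pow 2)
    refine dF.congr_deriv ?_
    simp only [hG, id_eq]
    push_cast
    ring
  -- derivative of G on (0, ∞)
  have hGd : ∀ x : ℝ, 0 < x → HasDerivAt G
      (c * ((2*γ-1) * x ^ (2*γ-2) + (1 * ((2*γ-1) * x ^ (2*γ-2))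
          + (x - b) * ((2*γ-1) * ((2*γ-2) * x ^ (2*γ-3)))))
        - 2 * ((γ * x ^ (γ-1)) * (γ * x ^ (γ-1))
          + (x ^ γ - b ^ γ) * (γ * ((γ-1) * x ^ (γ-2))))) x := by
    intro x hx
    have d1 : HasDerivAt (fun y : ℝ => y ^ (2*γ-1)) ((2*γ-1) * x ^ (2*γ-2)) x := by
      have := Real.hasDerivAt_rpow_const (x := x) (p := 2*γ-1) (Or.inl hx.ne')
      convert this using 2; ring
    have d2 : HasDerivAt (fun y : ℝ => y ^ γ) (γ * x ^ (γ-1)) x :=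
      Real.hasDerivAt_rpow_const (Or.inl hx.ne')
    have d3 : HasDerivAt (fun y : ℝ => y ^ (2*γ-2)) ((2*γ-2) * x ^ (2*γ-3)) x := by
      have := Real.hasDerivAt_rpow_const (x := x) (p := 2*γ-2) (Or.inl hx.ne')
      convert this using 2; ring
    have d4 : HasDerivAt (fun y : ℝ => y ^ (γ-1)) ((γ-1) * x ^ (γ-2)) x := by
      have := Real.hasDerivAt_rpow_const (x := x) (p := γ-1) (Or.inl hx.ne')
      convert this using 2; ring
    exact (((d1.sub_const _).add (((hasDerivAt_id x).sub_const b).mul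
      (d3.const_mul (2*γ-1)))).const_mul c).sub
      (((d2.sub_const (b ^ γ)).mul (d4.const_mul γ)).const_mul 2)
  -- G' ≥ 0 for b ≤ x
  have hG'nn : ∀ x : ℝ, b ≤ x →
      0 ≤ c * ((2*γ-1) * x ^ (2*γ-2) + (1 * ((2*γ-1) * x ^ (2*γ-2))
          + (x - b) * ((2*γ-1) * ((2*γ-2) * x ^ (2*γ-3)))))
        - 2 * ((γ * x ^ (γ-1)) * (γ * x ^ (γ-1))
          + (x ^ γ - b ^ γ) * (γ * ((γ-1) * x ^ (γ-2)))) := by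
    intro x hbx
    have hx : 0 < x := lt_of_lt_of_le hb hbx
    have hB := bern hb.le hbx hγ.le
    have hu2 : x ^ (2*γ-2) = x ^ (γ-1) * x ^ (γ-1) := by
      rw [← Real.rpow_add hx]; ring_nf
    have huv : x ^ (2*γ-3) = x ^ (γ-1) * x ^ (γ-2) := by
      rw [← Real.rpow_add hx]; ring_nf
    have hv : 0 ≤ x ^ (γ-2) := Real.rpow_nonneg hx.le _
    have hγ1 : 0 < γ - 1 := by linarith
    rw [hu2, huv]
    have hgoal : c * ((2*γ-1) * (x ^ (γ-1) * x ^ (γ-1)) + (1 * ((2*γ-1) * (x ^ (γ-1) * x ^ (γ-1)))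
          + (x - b) * ((2*γ-1) * ((2*γ-2) * (x ^ (γ-1) * x ^ (γ-2))))))
        - 2 * ((γ * x ^ (γ-1)) * (γ * x ^ (γ-1))
          + (x ^ γ - b ^ γ) * (γ * ((γ-1) * x ^ (γ-2))))
        = 2 * γ * (γ-1) * (x ^ (γ-2) * (γ * x ^ (γ-1) * (x - b) - (x ^ γ - b ^ γ))) := by
      have hc' : c * (2*γ-1) = γ^2 := by rw [hc, div_mul_cancel₀ _ h2γ.ne']
      linear_combination (2 * (x^(γ-1)*x^(γ-1)) + (x-b)*(2*γ-2)*(x^(γ-1)*x^(γ-2))) * hc'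
    rw [hgoal]
    apply mul_nonneg
    · positivity
    · exact mul_nonneg hv (by linarith)
  have hconv : Convex ℝ (Set.Ici b) := convex_Ici b
  have hint : interior (Set.Ici b) = Set.Ioi b := interior_Ici
  -- G monotone on [b, ∞)
  have hGmono : MonotoneOn G (Set.Ici b) := by
    apply monotoneOn_of_deriv_nonneg hconv
    · intro x hx
      exact (hGd x (lt_of_lt_of_le hb hx)).continuousAt.continuousWithinAt
    · intro x hx
      rw [hint] at hx
      exact (hGd x (hb.trans hx)).differentiableAt.differentiableWithinAt
    · intro x hx
      rw [hint] at hx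
      rw [(hGd x (hb.trans hx)).deriv]
      exact hG'nn x (le_of_lt hx)
  have hGb : G b = 0 := by simp [hG]
  have hGnn : ∀ x ∈ Set.Ici b, 0 ≤ G x := by
    intro x hx
    rw [← hGb]
    exact hGmono (Set.self_mem_Ici) hx hx
  -- F monotone on [b, ∞)
  have hFmono : MonotoneOn F (Set.Ici b) := by
    apply monotoneOn_of_deriv_nonneg hconv
    · intro x hx
      exact (hFd x (lt_of_lt_of_le hb hx)).continuousAt.continuousWithinAt
    · intro x hx
      rw [hint] at hx
      exact (hFd x (hb.trans hx)).differentiableAt.differentiableWithinAt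
    · intro x hx
      rw [hint] at hx
      rw [(hFd x (hb.trans hx)).deriv]
      exact hGnn x (le_of_lt hx : b ≤ x)
  have hFb : F b = 0 := by simp [hF]
  have hfin := hFmono Set.self_mem_Ici (show a ∈ Set.Ici b from hba) hba
  rw [hFb] at hfin
  simp only [hF] at hfin
  have e1 : (2:ℝ)*γ-1 = 2*γ-1 := rfl
  linarith [hfin]

theorem stmt2 (a b γ : ℝ) (ha : 0 ≤ a) (hb : 0 ≤ b) (hγ : 1 < γ) :
    (a ^ γ - b ^ γ) ^ 2 ≤
      γ ^ 2 / (2 * γ - 1) * ((a - b) * (a ^ (2 * γ - 1) - b ^ (2 * γ - 1))) := by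
  have h2γ : (0:ℝ) < 2 * γ - 1 := by linarith
  have key : ∀ x y : ℝ, 0 ≤ y → y ≤ x → (x ^ γ - y ^ γ) ^ 2 ≤
      γ ^ 2 / (2 * γ - 1) * ((x - y) * (x ^ (2 * γ - 1) - y ^ (2 * γ - 1))) := by
    intro x y hy hyx
    rcases eq_or_lt_of_le hy with hy0 | hy0
    · -- y = 0
      subst hy0
      rw [Real.zero_rpow (by positivity : γ ≠ 0), Real.zero_rpow h2γ.ne']
      rcases eq_or_lt_of_le (hy.trans hyx) with hx0 | hx0
      · simp [← hx0, Real.zero_rpow (by positivity : γ ≠ 0)]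
      · have h1 : (x ^ γ - 0) ^ 2 = x ^ (2*γ) := by
          rw [sub_zero, sq, ← Real.rpow_add hx0]; ring_nf
        have h2 : (x - 0) * (x ^ (2*γ-1) - 0) = x ^ (2*γ) := by
          rw [sub_zero, sub_zero, ← Real.rpow_one_add' (le_of_lt hx0) (by linarith)]
          ring_nf
        rw [h1, h2]
        have hpow : 0 ≤ x ^ (2*γ) := Real.rpow_nonneg hx0.le _
        have h1c : 1 ≤ γ ^ 2 / (2*γ-1) := by
          rw [le_div_iff₀ h2γ]; nlinarith
        nlinarith [mul_nonneg (sub_nonneg.mpr h1c) hpow]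
    · exact main_pos x y γ hy0 hyx hγ
  rcases le_total b a with hba | hab
  · exact key a b hb hba
  · have h := key b a ha hab
    have e1 : (a ^ γ - b ^ γ) ^ 2 = (b ^ γ - a ^ γ) ^ 2 := by ring
    have e2 : (a - b) * (a ^ (2*γ-1) - b ^ (2*γ-1))
        = (b - a) * (b ^ (2*γ-1) - a ^ (2*γ-1)) := by ring
    rw [e1, e2]
    exact h
end

section
/- Let $\gamma>1$ and $k>0$. For all reals $a>k\ge b\ge 0$, $$\frac{2\gamma-1}{\gamma^2}\,(a^{\gamma}-k^{\gamma-1}b)^2\ \le\ (a-b)\,(a^{2\gamma-1}-k^{2\gamma-2}b).$$ -/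
open Real MeasureTheory intervalIntegral


lemma lemA (γ k a : ℝ) (hγ : 1 < γ) (hk : 0 < k) (hka : k < a) :
    (2*γ-1) * (a^γ - k^γ)^2 ≤ γ^2 * ((a-k) * (a^(2*γ-1) - k^(2*γ-1))) := by
  have hγ0 : (0:ℝ) < γ := by linarith
  have h2γ : (0:ℝ) < 2*γ-1 := by linarith
  have hak : (0:ℝ) < a - k := by linarith
  have hI1 : ∫ t in k..a, t^(γ-1) = (a^γ - k^γ)/γ := by
    rw [integral_rpow (Or.inl (by linarith))]
    norm_num
  have hI2 : ∫ t in k..a, t^(2*γ-2) = (a^(2*γ-1) - k^(2*γ-1))/(2*γ-1) := by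
    rw [integral_rpow (Or.inl (by linarith))]
    ring_nf
  set V : ℝ := (a^γ - k^γ)/γ with hV
  set W : ℝ := (a^(2*γ-1) - k^(2*γ-1))/(2*γ-1) with hW
  set lam : ℝ := V/(a-k) with hlam
  have hint1 : IntervalIntegrable (fun t : ℝ => t^(γ-1)) volume k a :=
    (continuousOn_id.rpow_const (fun x _ => Or.inr (by linarith))).intervalIntegrable
  have hint2 : IntervalIntegrable (fun t : ℝ => t^(2*γ-2)) volume k a :=
    (continuousOn_id.rpow_const (fun x _ => Or.inr (by linarith))).intervalIntegrable
  have h0 : (0:ℝ) ≤ ∫ t in k..a, (t^(γ-1) - lam)^2 :=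
    intervalIntegral.integral_nonneg (le_of_lt hka) (fun t _ => sq_nonneg _)
  have hcong : ∫ t in k..a, (t^(γ-1) - lam)^2
      = ∫ t in k..a, (t^(2*γ-2) - 2*lam*t^(γ-1) + lam^2) := by
    apply intervalIntegral.integral_congr
    intro t ht
    have ht0 : 0 < t := by
      rcases Set.mem_uIcc.mp ht with h | h
      · linarith [h.1]
      · linarith [h.1]
    have hsq : t^(γ-1) * t^(γ-1) = t^(2*γ-2) := by
      rw [← Real.rpow_add ht0]; congr 1; ring
    simp only
    rw [← hsq]; ring
  have hsplit : ∫ t in k..a, (t^(2*γ-2) - 2*lam*t^(γ-1) + lam^2)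
      = (∫ t in k..a, t^(2*γ-2)) - 2*lam*(∫ t in k..a, t^(γ-1)) + lam^2*(a-k) := by
    rw [intervalIntegral.integral_add (hint2.sub (hint1.const_mul _)) intervalIntegrable_const,
        intervalIntegral.integral_sub hint2 (hint1.const_mul _),
        intervalIntegral.integral_const_mul, intervalIntegral.integral_const, smul_eq_mul]
    ring
  rw [hcong, hsplit, hI1, hI2] at h0
  -- h0 : 0 ≤ W - 2*lam*V + lam^2*(a-k)
  have e1 : lam * (a-k) = V := div_mul_cancel₀ _ hak.ne'
  have e2 : lam^2*(a-k)*(a-k) = V*V := by rw [← e1]; ring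
  have e3 : lam*(a-k)*V = V*V := by rw [e1]
  have key : V^2 ≤ (a-k)*W := by
    nlinarith [mul_le_mul_of_nonneg_left h0 hak.le, e2, e3]
  have e4 : (a^γ-k^γ)^2 = γ^2 * V^2 := by rw [hV]; field_simp
  have e5 : (a-k)*(a^(2*γ-1)-k^(2*γ-1)) = (2*γ-1)*((a-k)*W) := by
    rw [hW]; field_simp
  rw [e4, e5]
  nlinarith [mul_le_mul_of_nonneg_left key (mul_pos h2γ (pow_pos hγ0 2)).le]


lemma lemB (c X Y s t P Q : ℝ) (hc0 : 0 < c) (hc1 : c ≤ 1) (hX0 : 0 ≤ X) (hY0 : 0 ≤ Y)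
    (hs0 : 0 ≤ s) (ht0 : 0 ≤ t) (hP0 : 0 ≤ P) (hQ0 : 0 ≤ Q)
    (h1 : c*X^2 ≤ s*P) (eY2 : Y^2 = t*Q) : c*(X+Y)^2 ≤ (s+t)*(P+Q) := by
  have h6 : c*Y^2 ≤ t*Q := by nlinarith [sq_nonneg Y]
  have cross : 2*(c*X*Y) ≤ s*Q + t*P := by
    have A2 : c*(c*X^2) ≤ c*X^2 := mul_le_of_le_one_left (by positivity) hc1
    have B1 : c*(c*X^2) ≤ s*P := le_trans A2 h1
    have A3 : (c*(c*X^2))*Y^2 ≤ (s*P)*(t*Q) :=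
      mul_le_mul B1 (le_of_eq eY2) (sq_nonneg Y) (mul_nonneg hs0 hP0)
    have h5 : (2*(c*X*Y))^2 ≤ (s*Q + t*P)^2 := by
      nlinarith [A3, sq_nonneg (s*Q - t*P)]
    have hL : 0 ≤ 2*(c*X*Y) := by positivity
    have hR : 0 ≤ s*Q + t*P := by positivity
    calc 2*(c*X*Y) = Real.sqrt ((2*(c*X*Y))^2) := (Real.sqrt_sq hL).symm
      _ ≤ Real.sqrt ((s*Q+t*P)^2) := Real.sqrt_le_sqrt h5
      _ = s*Q+t*P := Real.sqrt_sq hR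
  nlinarith [h1, h6, cross]

theorem stmt3 (γ k a b : ℝ) (hγ : 1 < γ) (hk : 0 < k) (hb : 0 ≤ b) (hbk : b ≤ k)
    (hka : k < a) :
    (2 * γ - 1) / γ ^ 2 * (a ^ γ - k ^ (γ - 1) * b) ^ 2 ≤
      (a - b) * (a ^ (2 * γ - 1) - k ^ (2 * γ - 2) * b) := by
  have hγ0 : (0:ℝ) < γ := by linarith
  have h2γ : (0:ℝ) < 2*γ-1 := by linarith
  have ha0 : (0:ℝ) < a := lt_trans hk hka
  have hc0 : 0 < (2*γ-1)/γ^2 := by positivity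
  have hc1 : (2*γ-1)/γ^2 ≤ 1 := by
    rw [div_le_one (by positivity)]; nlinarith [sq_nonneg (γ-1)]
  have ek : k^γ = k^(γ-1)*k := by
    rw [← Real.rpow_add_one hk.ne']; congr 1; ring
  have ek2 : k^(2*γ-1) = k^(2*γ-2)*k := by
    rw [← Real.rpow_add_one hk.ne']; congr 1; ring
  have ekk : k^(γ-1)*k^(γ-1) = k^(2*γ-2) := by
    rw [← Real.rpow_add hk]; congr 1; ring
  have hX0 : 0 ≤ a^γ - k^γ := by
    have := Real.rpow_le_rpow hk.le hka.le hγ0.le; linarith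
  have hP0 : 0 ≤ a^(2*γ-1) - k^(2*γ-1) := by
    have := Real.rpow_le_rpow hk.le hka.le h2γ.le; linarith
  have hY0 : 0 ≤ k^(γ-1)*(k-b) := by
    have : (0:ℝ) ≤ k^(γ-1) := (Real.rpow_pos_of_pos hk _).le
    nlinarith
  have hQ0 : 0 ≤ k^(2*γ-2)*(k-b) := by
    have : (0:ℝ) ≤ k^(2*γ-2) := (Real.rpow_pos_of_pos hk _).le
    nlinarith
  have eY2 : (k^(γ-1)*(k-b))^2 = (k-b)*(k^(2*γ-2)*(k-b)) := by
    rw [sq, mul_mul_mul_comm, ekk]; ring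
  have h1 : (2*γ-1)/γ^2*(a^γ - k^γ)^2 ≤ (a-k)*(a^(2*γ-1) - k^(2*γ-1)) := by
    rw [div_mul_eq_mul_div, div_le_iff₀ (by positivity)]
    nlinarith [lemA γ k a hγ hk hka]
  have main := lemB ((2*γ-1)/γ^2) (a^γ - k^γ) (k^(γ-1)*(k-b)) (a-k) (k-b)
    (a^(2*γ-1) - k^(2*γ-1)) (k^(2*γ-2)*(k-b)) hc0 hc1 hX0 hY0
    (by linarith) (by linarith) hP0 hQ0 h1 eY2
  have g1 : a^γ - k^(γ-1)*b = (a^γ - k^γ) + k^(γ-1)*(k-b) := by rw [ek]; ring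
  have g2 : a - b = (a-k) + (k-b) := by ring
  have g3 : a^(2*γ-1) - k^(2*γ-2)*b
      = (a^(2*γ-1) - k^(2*γ-1)) + k^(2*γ-2)*(k-b) := by rw [ek2]; ring
  rw [g1, g2, g3]
  exact main
end

section
/- Let $p>1$, $s\in(0,1)$, $m>p-1$, $N>sp$, and suppose $q_0\ge 1$ satisfies $q_0>\big(1-\frac{p-1}{m}\big)\frac{N}{sp}$ and $q_0<\frac{N}{sp}$. Define recursively $q_{n+1}=\frac{N(p-1)q_n}{m(N-sp\,q_n)}$ whenever $q_n<\frac{N}{sp}$. Then the sequence $(q_n)$ is strictly increasing as long as it is defined, and there exists $n_0$ with $q_{n_0}\ge \frac{N}{sp}$. -/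
theorem stmt9 (p s m N : ℝ) (q : ℕ → ℝ) (hp : 1 < p) (hs : 0 < s) (hs1 : s < 1)
    (hm : p - 1 < m) (hN : s * p < N) (hq0 : 1 ≤ q 0)
    (hq0' : (1 - (p - 1) / m) * (N / (s * p)) < q 0) (hq0'' : q 0 < N / (s * p))
    (hrec : ∀ n, q n < N / (s * p) →
      q (n + 1) = N * (p - 1) * q n / (m * (N - s * p * q n))) :
    (∀ n, (∀ k ≤ n, q k < N / (s * p)) → q n < q (n + 1)) ∧
      ∃ n₀, N / (s * p) ≤ q n₀ := by
  have hsp : 0 < s * p := mul_pos hs (by linarith)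
  have hN0 : 0 < N := lt_trans hsp hN
  have hm0 : 0 < m := by linarith
  set A := N / (s * p) with hA
  set ℓ := (1 - (p - 1) / m) * (N / (s * p)) with hℓdef
  have hℓeq : ℓ = N * (m - (p - 1)) / (m * (s * p)) := by
    rw [hℓdef]
    field_simp
  have hℓpos : 0 < ℓ := by
    rw [hℓeq]
    apply div_pos (by nlinarith) (by positivity)
  -- step lemma
  have step : ∀ x : ℝ, ℓ < x → x < A →
      x < N * (p - 1) * x / (m * (N - s * p * x)) := by
    intro x hℓx hxA
    have hx0 : 0 < x := lt_trans hℓpos hℓx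
    have hden : 0 < N - s * p * x := by
      have : s * p * x < N := (lt_div_iff₀' hsp).mp hxA
      linarith
    have hkey : N * (m - (p - 1)) < x * (m * (s * p)) := by
      rw [hℓeq] at hℓx
      exact (div_lt_iff₀ (by positivity)).mp hℓx
    rw [lt_div_iff₀ (by positivity)]
    nlinarith [mul_lt_mul_of_pos_left hkey hx0]
  -- main inductive claim
  have main : ∀ n, (∀ k ≤ n, q k < A) → ℓ < q n ∧ q n < q (n + 1) := by
    intro n
    induction n with
    | zero =>
      intro h
      refine ⟨hq0', ?_⟩
      rw [hrec 0 hq0'']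
      exact step _ hq0' hq0''
    | succ n ih =>
      intro h
      have hprev := ih (fun k hk => h k (le_trans hk (Nat.le_succ n)))
      have hℓn1 : ℓ < q (n + 1) := lt_trans hprev.1 hprev.2
      have hA1 : q (n + 1) < A := h (n + 1) le_rfl
      refine ⟨hℓn1, ?_⟩
      rw [hrec (n + 1) hA1]
      exact step _ hℓn1 hA1
  constructor
  · intro n h
    exact (main n h).2
  · by_contra hcon
    push_neg at hcon
    have hall : ∀ n, q n < A := fun n => hcon n
    have hinc : ∀ n, ℓ < q n ∧ q n < q (n + 1) := fun n =>
      main n (fun k _ => hall k)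
    have hmono : ∀ n, q 0 ≤ q n := by
      intro n
      induction n with
      | zero => exact le_refl _
      | succ n ih => exact le_trans ih (le_of_lt (hinc n).2)
    have hq00 : 0 < q 0 := by linarith
    have hden0 : 0 < N - s * p * q 0 := by
      have : s * p * q 0 < N := (lt_div_iff₀' hsp).mp hq0''
      linarith
    set c := N * (p - 1) / (m * (N - s * p * q 0)) with hc
    have hc1 : 1 < c := by
      rw [hc, lt_div_iff₀ (by positivity)]
      have hkey : N * (m - (p - 1)) < q 0 * (m * (s * p)) := by
        rw [hℓeq] at hq0'
        exact (div_lt_iff₀ (by positivity)).mp hq0'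
      nlinarith
    have hgrow : ∀ n, q 0 * c ^ n ≤ q n := by
      intro n
      induction n with
      | zero => simp
      | succ n ih =>
        have hdenn : 0 < N - s * p * q n := by
          have : s * p * q n < N := (lt_div_iff₀' hsp).mp (hall n)
          linarith
        have hqn0 : 0 < q n := lt_trans hℓpos (hinc n).1
        have hcle : c ≤ N * (p - 1) / (m * (N - s * p * q n)) := by
          rw [hc]
          apply div_le_div_of_nonneg_left (by nlinarith) (mul_pos hm0 hdenn)
          have : s * p * q 0 ≤ s * p * q n :=
            mul_le_mul_of_nonneg_left (hmono n) (le_of_lt hsp)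
          nlinarith
        have : q n * c ≤ q (n + 1) := by
          rw [hrec n (hall n)]
          have : q n * c ≤ q n * (N * (p - 1) / (m * (N - s * p * q n))) :=
            mul_le_mul_of_nonneg_left hcle (le_of_lt hqn0)
          calc q n * c ≤ q n * (N * (p - 1) / (m * (N - s * p * q n))) := this
            _ = N * (p - 1) * q n / (m * (N - s * p * q n)) := by ring
        calc q 0 * c ^ (n + 1) = (q 0 * c ^ n) * c := by ring
          _ ≤ q n * c := mul_le_mul_of_nonneg_right ih (by linarith)
          _ ≤ q (n + 1) := this
    obtain ⟨n, hn⟩ := pow_unbounded_of_one_lt (A / q 0) hc1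
    have : A < q 0 * c ^ n := by
      rw [div_lt_iff₀ hq00] at hn
      linarith [hn]
    linarith [hgrow n, hall n]
end

section
/- Let $p>1$ and let $f:[0,\infty)\to(0,\infty)$ be nondecreasing with $f(0)>0$ such that $g:=f^{1/(p-1)}$ is convex and $\lim_{t\to\infty}f(t)/t^{p-1}=\infty$. Set $h(u)=\int_0^u g(t)^{-1}dt$ and suppose $h(\infty)=\infty$. Fix $\varepsilon\in(0,1)$ and define $v=v(u)$ by $h(v)=(1-\varepsilon)^{1/(p-1)}h(u)$. Then there is a constant $C>0$ such that for all $u\ge 0$, $$\Big(1-(1-\varepsilon)^{1/(p-1)}\Big)\, f(v(u))^{1/(p-1)}\ \le\ \frac{u}{h(u)}\ \le\ C(1+u).$$ -/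
open Real

theorem stmt11 (p ε : ℝ) (hp : 1 < p) (hε : 0 < ε) (hε1 : ε < 1)
    (f g h v : ℝ → ℝ)
    (hf_pos : ∀ t ≥ (0:ℝ), 0 < f t) (hf_mono : MonotoneOn f (Set.Ici 0)) (hf0 : 0 < f 0)
    (hg : ∀ t, g t = f t ^ (1 / (p - 1))) (hconv : ConvexOn ℝ (Set.Ici 0) g)
    (hsuper : Filter.Tendsto (fun t => f t / t ^ (p - 1)) Filter.atTop Filter.atTop)
    (hh : ∀ u, h u = ∫ t in (0:ℝ)..u, 1 / g t)
    (hinf : Filter.Tendsto h Filter.atTop Filter.atTop)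
    (hv : ∀ u ≥ (0:ℝ), 0 ≤ v u ∧ v u ≤ u ∧ h (v u) = (1 - ε) ^ (1 / (p - 1)) * h u) :
    ∃ C > (0:ℝ), ∀ u > (0:ℝ),
      (1 - (1 - ε) ^ (1 / (p - 1))) * f (v u) ^ (1 / (p - 1)) ≤ u / h u ∧
        u / h u ≤ C * (1 + u) := by
  have hq : 0 < 1 / (p - 1) := div_pos one_pos (by linarith)
  have hgpos : ∀ t ≥ (0:ℝ), 0 < g t := fun t ht => by
    rw [hg]; exact Real.rpow_pos_of_pos (hf_pos t ht) _
  have hgmono : MonotoneOn g (Set.Ici 0) := by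
    intro x hx y hy hxy
    rw [hg, hg]
    exact Real.rpow_le_rpow (hf_pos x hx).le (hf_mono hx hy hxy) hq.le
  -- antitone of 1/g on [a,b] with 0 ≤ a
  have hanti : ∀ a : ℝ, 0 ≤ a → AntitoneOn (fun t => 1 / g t) (Set.Ici a) := by
    intro a ha x hx y hy hxy
    have hx0 : (0:ℝ) ≤ x := ha.trans hx
    have hy0 : (0:ℝ) ≤ y := ha.trans hy
    exact one_div_le_one_div_of_le (hgpos x hx0) (hgmono hx0 hy0 hxy)
  have hint : ∀ a b : ℝ, 0 ≤ a → a ≤ b →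
      IntervalIntegrable (fun t => 1 / g t) MeasureTheory.volume a b := by
    intro a b ha hab
    apply AntitoneOn.intervalIntegrable
    intro x hx y hy hxy
    rw [Set.uIcc_of_le hab] at hx hy
    exact hanti a ha hx.1 hy.1 hxy
  -- lower bound: (b-a)/g b ≤ ∫_a^b 1/g and ∫_a^b 1/g ≤ (b-a)/g a
  have hlow : ∀ a b : ℝ, 0 ≤ a → a ≤ b →
      (b - a) * (1 / g b) ≤ ∫ t in a..b, 1 / g t := by
    intro a b ha hab
    have := intervalIntegral.integral_mono_on hab
      (intervalIntegrable_const (c := 1 / g b)) (hint a b ha hab)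
      (fun x hx => hanti a ha hx.1 (hx.1.trans hx.2) hx.2)
    simpa using this
  have hup : ∀ a b : ℝ, 0 ≤ a → a ≤ b →
      (∫ t in a..b, 1 / g t) ≤ (b - a) * (1 / g a) := by
    intro a b ha hab
    have := intervalIntegral.integral_mono_on hab (hint a b ha hab)
      (intervalIntegrable_const (c := 1 / g a))
      (fun x hx => hanti a ha (le_refl a) hx.1 hx.1)
    simpa using this
  have hhpos : ∀ u : ℝ, 0 < u → 0 < h u := by
    intro u hu
    have := hlow 0 u le_rfl hu.le
    rw [← hh u] at this
    have : u * (1 / g u) ≤ h u := by simpa using this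
    have hgu := hgpos u hu.le
    nlinarith [mul_pos hu (one_div_pos.mpr hgu)]
  have hg1 : 0 < g 1 := hgpos 1 zero_le_one
  set α := (1 - ε) ^ (1 / (p - 1)) with hα
  have hαlt : α < 1 := by
    rw [hα]
    exact Real.rpow_lt_one (by linarith) (by linarith) hq
  refine ⟨g 1, hg1, fun u hu => ?_⟩
  obtain ⟨hv0, hvu, hveq⟩ := hv u hu.le
  have hhu := hhpos u hu
  constructor
  · -- first inequality
    have hgv := hgpos (v u) hv0
    rw [← hg (v u)]
    rw [le_div_iff₀ hhu]
    -- (1-α) h u = h u - h (v u) = ∫_{v u}^u ≤ (u - v u)/g(v u) ≤ u / g(v u)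
    have hadd : (∫ t in (0:ℝ)..(v u), 1 / g t) + ∫ t in (v u)..u, 1 / g t
        = ∫ t in (0:ℝ)..u, 1 / g t :=
      intervalIntegral.integral_add_adjacent_intervals
        (hint 0 (v u) le_rfl hv0) (hint (v u) u hv0 hvu)
    have hdiff : h u - h (v u) = ∫ t in (v u)..u, 1 / g t := by
      rw [hh, hh]; linarith [hadd]
    have hle : h u - h (v u) ≤ (u - v u) * (1 / g (v u)) := by
      rw [hdiff]; exact hup (v u) u hv0 hvu
    have : (1 - α) * h u ≤ (u - v u) * (1 / g (v u)) := by
      rw [hveq] at hle; linarith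
    have h2 : (1 - α) * h u * g (v u) ≤ u - v u := by
      have h5 := mul_le_mul_of_nonneg_right this hgv.le
      have heq2 : (u - v u) * (1 / g (v u)) * g (v u) = u - v u := by field_simp
      linarith
    nlinarith
  · -- second inequality
    rw [div_le_iff₀ hhu]
    rcases le_or_gt u 1 with hu1 | hu1
    · -- u ≤ 1 : h u ≥ u / g 1
      have h1 : u * (1 / g u) ≤ h u := by
        have := hlow 0 u le_rfl hu.le; rw [← hh u] at this; simpa using this
      have hgu1 : g u ≤ g 1 := hgmono hu.le (Set.mem_Ici.mpr zero_le_one) hu1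
      have hgu := hgpos u hu.le
      have : u * (1 / g 1) ≤ h u := by
        refine le_trans ?_ h1
        exact mul_le_mul_of_nonneg_left (one_div_le_one_div_of_le hgu hgu1) hu.le
      have h4 := mul_le_mul_of_nonneg_left this hg1.le
      have heq : g 1 * (u * (1 / g 1)) = u := by field_simp
      nlinarith [mul_pos (mul_pos hg1 hu) hhu]
    · -- u > 1 : h u ≥ h 1 ≥ 1/g 1
      have hadd : (∫ t in (0:ℝ)..1, 1 / g t) + ∫ t in (1:ℝ)..u, 1 / g t
          = ∫ t in (0:ℝ)..u, 1 / g t :=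
        intervalIntegral.integral_add_adjacent_intervals
          (hint 0 1 le_rfl zero_le_one) (hint 1 u zero_le_one hu1.le)
      have h1le := hlow 0 1 le_rfl zero_le_one
      have h2le : (u - 1) * (1 / g u) ≤ ∫ t in (1:ℝ)..u, 1 / g t :=
        hlow 1 u zero_le_one hu1.le
      have hgu := hgpos u hu.le
      have hnn : (0:ℝ) ≤ (u - 1) * (1 / g u) := mul_nonneg (by linarith) (by positivity)
      have hhge : 1 / g 1 ≤ h u := by
        rw [hh, ← hadd]; nlinarith
      have : g 1 * ((1 + u) * h u) ≥ g 1 * ((1 + u) * (1 / g 1)) := by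
        have : (0:ℝ) ≤ 1 + u := by linarith
        gcongr
      have heq : g 1 * ((1 + u) * (1 / g 1)) = 1 + u := by field_simp
      nlinarith
end

section
/- Let $p>1$ and $\tau>\frac{p-2}{p-1}$. Let $f\in C^2((0,\infty))$ be positive, increasing, with $f'>0$, such that $\lim_{t\to\infty}\frac{f(t)f''(t)}{f'(t)^2}=\tau$, and set $\tilde f = f - f(0)$, $\kappa(t)=\int_0^t \tilde f(\sigma)^{2\gamma-2}f'(\sigma)^2\,d\sigma$. Then for every $\gamma$ with $\frac{1}{p-1}<\gamma<\frac{1+\sqrt{1-(p-1)(1-\tau)}}{p-1}$, $$\limsup_{t\to\infty}\ \frac{(p-1)\gamma^2\,\kappa(t)}{\tilde f(t)^{2\gamma-1}f'(t)}\ <\ 1.$$ -/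
set_option maxHeartbeats 1000000

open Real Filter

theorem stmt16 (p τ : ℝ) (hp : 1 < p) (hτ : (p - 2) / (p - 1) < τ)
    (f : ℝ → ℝ) (hfC2 : ContDiffOn ℝ 2 f (Set.Ioi 0))
    (hf_pos : ∀ t > (0:ℝ), 0 < f t) (hf' : ∀ t > (0:ℝ), 0 < deriv f t)
    (hf0 : 0 < f 0) (hf_mono : MonotoneOn f (Set.Ici 0))
    (hsuper : Tendsto (fun t => f t / t ^ (p - 1)) atTop atTop)
    (hF2 : if 2 ≤ p then ConvexOn ℝ (Set.Ici 0) (fun t => (f t - f 0) ^ ((1:ℝ) / (p - 1)))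
      else ConvexOn ℝ (Set.Ici 0) f)
    (hlim : Tendsto (fun t => f t * deriv (deriv f) t / (deriv f t) ^ 2) atTop (nhds τ))
    (κ : ℝ → ℝ) (γ : ℝ)
    (hκ : ∀ t, κ t = ∫ σ in (0:ℝ)..t, (f σ - f 0) ^ (2 * γ - 2) * (deriv f σ) ^ 2)
    (hγ1 : 1 / (p - 1) < γ)
    (hγ2 : γ < (1 + Real.sqrt (1 - (p - 1) * (1 - τ))) / (p - 1)) :
    Filter.limsup (fun t => (p - 1) * γ ^ 2 * κ t / ((f t - f 0) ^ (2 * γ - 1) * deriv f t))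
      atTop < 1 := by
  have hp1 : 0 < p - 1 := by linarith
  have hγpos : 0 < γ := lt_trans (by positivity) hγ1
  have hγp : 1 < (p - 1) * γ := by rw [div_lt_iff₀ hp1] at hγ1; linarith
  -- the quadratic inequality
  set A : ℝ := (p - 1) * γ ^ 2 with hA_def
  have hApos : 0 < A := by positivity
  have hAc : A < 2 * γ - 1 + τ := by
    have hx : 0 < 1 - (p-1)*(1-τ) := by rw [div_lt_iff₀ hp1] at hτ; nlinarith
    have hs2 : Real.sqrt (1-(p-1)*(1-τ)) ^ 2 = 1-(p-1)*(1-τ) := Real.sq_sqrt hx.le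
    have h2 : (p-1)*γ - 1 < Real.sqrt (1-(p-1)*(1-τ)) := by
      rw [lt_div_iff₀ hp1] at hγ2; linarith
    have h3 : ((p-1)*γ-1)^2 < 1-(p-1)*(1-τ) := by nlinarith
    nlinarith [sq_nonneg γ, mul_pos hp1 hp1]
  set c' : ℝ := (A + (2*γ - 1 + τ)) / 2 with hc'_def
  have hc'A : A < c' := by rw [hc'_def]; linarith
  have hc'pos : 0 < c' := lt_trans hApos hc'A
  set ε : ℝ := (2*γ - 1 + τ) - c' with hε_def
  have hεpos : 0 < ε := by rw [hε_def, hc'_def]; linarith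
  have hc'eq : c' = 2*γ - 1 + (τ - ε) := by rw [hε_def]; ring
  -- differentiability package
  have hopen : IsOpen (Set.Ioi (0:ℝ)) := isOpen_Ioi
  have hfc : ContinuousOn f (Set.Ioi 0) := hfC2.continuousOn
  have hfd : ∀ t ∈ Set.Ioi (0:ℝ), HasDerivAt f (deriv f t) t := by
    intro t ht
    have h : DifferentiableOn ℝ f (Set.Ioi 0) := hfC2.differentiableOn (by norm_num)
    exact ((h t ht).differentiableAt (hopen.mem_nhds ht)).hasDerivAt
  have hf'C1 : ContDiffOn ℝ 1 (deriv f) (Set.Ioi 0) :=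
    hfC2.deriv_of_isOpen hopen (by norm_num)
  have hf'c : ContinuousOn (deriv f) (Set.Ioi 0) := hf'C1.continuousOn
  have hf'd : ∀ t ∈ Set.Ioi (0:ℝ), HasDerivAt (deriv f) (deriv (deriv f) t) t := by
    intro t ht
    have h : DifferentiableOn ℝ (deriv f) (Set.Ioi 0) := hf'C1.differentiableOn (by norm_num)
    exact ((h t ht).differentiableAt (hopen.mem_nhds ht)).hasDerivAt
  have hf''c : ContinuousOn (deriv (deriv f)) (Set.Ioi 0) :=
    hf'C1.continuousOn_deriv_of_isOpen hopen le_rfl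
  -- positivity of f t - f 0 on Ioi 0
  have hft : ∀ t > (0:ℝ), 0 < f t - f 0 := by
    intro t ht
    have hsm : StrictMonoOn f (Set.Ici (t/2)) := by
      apply strictMonoOn_of_deriv_pos (convex_Ici _)
      · exact hfc.mono (fun x hx => lt_of_lt_of_le (by linarith : (0:ℝ) < t/2) hx)
      · intro x hx
        rw [interior_Ici] at hx
        exact hf' x (by exact lt_trans (by linarith) hx)
    have h1 : f (t/2) < f t := hsm (Set.self_mem_Ici) (Set.mem_Ici.mpr (by linarith)) (by linarith)
    have h2 : f 0 ≤ f (t/2) := hf_mono Set.self_mem_Ici (Set.mem_Ici.mpr (by linarith)) (by linarith)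
    linarith
  -- f tends to infinity
  have hrpowtop : Tendsto (fun t : ℝ => t ^ (p-1)) atTop atTop := tendsto_rpow_atTop hp1
  have hftop : Tendsto f atTop atTop := by
    have h := hsuper.atTop_mul_atTop₀ hrpowtop
    apply h.congr'
    filter_upwards [eventually_gt_atTop 0] with t ht
    field_simp
  have hfttop : Tendsto (fun t => f t - f 0) atTop atTop :=
    tendsto_atTop_add_const_right atTop (-(f 0)) hftop |>.congr (fun t => by ring_nf)
  -- the modified ratio tends to τ
  have hratio : Tendsto (fun t => (f t - f 0) * deriv (deriv f) t / (deriv f t)^2)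
      atTop (nhds τ) := by
    have hinv : Tendsto (fun t => (f t)⁻¹) atTop (nhds 0) := hftop.inv_tendsto_atTop
    have h2 : Tendsto (fun t =>
        f t * deriv (deriv f) t / (deriv f t)^2
        - f 0 * (f t * deriv (deriv f) t / (deriv f t)^2 * (f t)⁻¹)) atTop
        (nhds (τ - f 0 * (τ * 0))) :=
      hlim.sub ((hlim.mul hinv).const_mul (f 0))
    rw [show τ - f 0 * (τ * 0) = τ by ring] at h2
    apply h2.congr'
    filter_upwards [hftop.eventually_gt_atTop 0] with t hftpos
    have hfne : f t ≠ 0 := ne_of_gt hftpos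
    rcases eq_or_ne (deriv f t) 0 with h0 | h0
    · simp [h0]
    · field_simp
  -- integrand and D
  set g : ℝ → ℝ := fun σ => (f σ - f 0) ^ (2 * γ - 2) * (deriv f σ)^2 with hg_def
  have hgc : ContinuousOn g (Set.Ioi 0) := by
    apply ContinuousOn.mul
    · exact ((hfc.sub continuousOn_const).rpow_const (fun x hx => Or.inl (hft x hx).ne'))
    · exact hf'c.pow 2
  have hgnonneg : ∀ σ > (0:ℝ), 0 ≤ g σ := fun σ hσ =>
    mul_nonneg (Real.rpow_nonneg (hft σ hσ).le _) (sq_nonneg _)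
  set D : ℝ → ℝ := fun t => (f t - f 0) ^ (2 * γ - 1) * deriv f t with hD_def
  have hDpos : ∀ t > (0:ℝ), 0 < D t := fun t ht =>
    mul_pos (Real.rpow_pos_of_pos (hft t ht) _) (hf' t ht)
  -- degenerate case: not integrable near 0
  by_cases hInt : IntervalIntegrable g MeasureTheory.volume 0 1
  case neg =>
    have hzero : ∀ t ≥ (1:ℝ), κ t = 0 := by
      intro t ht
      rw [hκ]
      apply intervalIntegral.integral_undef
      intro hcon
      refine hInt (hcon.mono_set ?_)
      rw [Set.uIcc_of_le (by norm_num : (0:ℝ) ≤ 1), Set.uIcc_of_le (by linarith : (0:ℝ) ≤ t)]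
      exact Set.Icc_subset_Icc le_rfl ht
    have hev : (fun t => (p - 1) * γ ^ 2 * κ t / ((f t - f 0) ^ (2 * γ - 1) * deriv f t))
        =ᶠ[atTop] (fun _ => (0:ℝ)) := by
      filter_upwards [eventually_ge_atTop 1] with t ht
      rw [hzero t ht]
      simp
    rw [limsup_congr hev, limsup_const]
    norm_num
  case pos =>
  have hIntT : ∀ t ≥ (1:ℝ), IntervalIntegrable g MeasureTheory.volume 0 t := by
    intro t ht
    refine hInt.trans ?_
    apply ContinuousOn.intervalIntegrable
    apply hgc.mono
    rw [Set.uIcc_of_le (by linarith : (1:ℝ) ≤ t)]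
    exact fun x hx => lt_of_lt_of_le one_pos hx.1
  -- choose T
  have hev1 : ∀ᶠ t in atTop, τ - ε < (f t - f 0) * deriv (deriv f) t / (deriv f t)^2 :=
    hratio.eventually (eventually_gt_nhds (by linarith))
  obtain ⟨T₀, hT₀⟩ := eventually_atTop.mp hev1
  set T := max T₀ 1 with hT_def
  have hT1 : (1:ℝ) ≤ T := le_max_right _ _
  have hTpos : (0:ℝ) < T := lt_of_lt_of_le one_pos hT1
  have hTrat : ∀ σ, T ≤ σ → τ - ε < (f σ - f 0) * deriv (deriv f) σ / (deriv f σ)^2 :=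
    fun σ hσ => hT₀ σ (le_trans (le_max_left _ _) hσ)
  -- derivative of D
  set D' : ℝ → ℝ := fun σ => (2*γ-1) * g σ + (f σ - f 0) ^ (2*γ-1) * deriv (deriv f) σ
    with hD'_def
  have hD'd : ∀ σ ∈ Set.Ioi (0:ℝ), HasDerivAt D (D' σ) σ := by
    intro σ hσ
    have h1 : HasDerivAt (fun t => (f t - f 0) ^ (2*γ-1))
        (deriv f σ * (2*γ-1) * (f σ - f 0) ^ (2*γ-1-1)) σ := by
      have h0 := ((hfd σ hσ).sub_const (f 0)).rpow_const (p := 2*γ-1) (Or.inl (hft σ hσ).ne')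
      simpa using h0
    have h2 := h1.mul (hf'd σ hσ)
    rw [show (2*γ-1-1) = 2*γ-2 by ring] at h2
    refine h2.congr_deriv ?_
    simp only [D', g]
    ring
  have hD'c : ContinuousOn D' (Set.Ioi 0) := by
    apply ContinuousOn.add
    · exact continuousOn_const.mul hgc
    · exact (((hfc.sub continuousOn_const).rpow_const
        (fun x hx => Or.inl (hft x hx).ne')).mul hf''c)
  -- key inequality
  have hκdiff : ∀ t, T ≤ t → κ t - κ T = ∫ σ in T..t, g σ := by
    intro t ht
    rw [hκ, hκ]
    exact (intervalIntegral.integral_interval_sub_left (hIntT t (le_trans hT1 ht))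
      (hIntT T hT1))
  have hkey : ∀ t, T ≤ t → c' * (κ t - κ T) ≤ D t - D T := by
    intro t ht
    have huIcc : Set.uIcc T t = Set.Icc T t := Set.uIcc_of_le ht
    have hsub : Set.Icc T t ⊆ Set.Ioi 0 := fun x hx => lt_of_lt_of_le hTpos hx.1
    have hgint : IntervalIntegrable g MeasureTheory.volume T t :=
      (hgc.mono (huIcc ▸ hsub)).intervalIntegrable
    have hD'int : IntervalIntegrable D' MeasureTheory.volume T t :=
      (hD'c.mono (huIcc ▸ hsub)).intervalIntegrable
    have hFTC : ∫ σ in T..t, D' σ = D t - D T :=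
      intervalIntegral.integral_eq_sub_of_hasDerivAt
        (fun σ hσ => hD'd σ (hsub (huIcc ▸ hσ))) hD'int
    have hmono : ∫ σ in T..t, c' * g σ ≤ ∫ σ in T..t, D' σ := by
      apply intervalIntegral.integral_mono_on ht (hgint.const_mul c') hD'int
      intro σ hσ
      have hσ0 : 0 < σ := lt_of_lt_of_le hTpos hσ.1
      have hY : (0:ℝ) < (deriv f σ)^2 := pow_pos (hf' σ hσ0) 2
      have hr := hTrat σ hσ.1
      rw [lt_div_iff₀ hY] at hr
      have hbase := hft σ hσ0
      have h6 : (f σ - f 0)^(2*γ-2) * ((τ-ε) * (deriv f σ)^2)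
          ≤ (f σ - f 0)^(2*γ-2) * ((f σ - f 0) * deriv (deriv f) σ) :=
        mul_le_mul_of_nonneg_left hr.le (Real.rpow_nonneg hbase.le _)
      have h7 : (f σ - f 0)^((2*γ-2):ℝ) * (f σ - f 0) = (f σ - f 0)^(2*γ-1) := by
        rw [show (2*γ-1) = (2*γ-2)+1 by ring, Real.rpow_add hbase, Real.rpow_one]
      have heq : (f σ - f 0)^(2*γ-2) * ((f σ - f 0) * deriv (deriv f) σ)
          = (f σ - f 0)^(2*γ-1) * deriv (deriv f) σ := by
        rw [← h7]; ring
      simp only [hD'_def, hg_def]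
      rw [hc'eq]
      calc (2*γ-1+(τ-ε)) * ((f σ - f 0) ^ (2*γ-2) * (deriv f σ)^2)
          = (2*γ-1) * ((f σ - f 0) ^ (2*γ-2) * (deriv f σ)^2)
            + (f σ - f 0)^(2*γ-2) * ((τ-ε) * (deriv f σ)^2) := by ring
        _ ≤ (2*γ-1) * ((f σ - f 0) ^ (2*γ-2) * (deriv f σ)^2)
            + (f σ - f 0)^(2*γ-1) * deriv (deriv f) σ := by rw [← heq]; linarith
    rw [hκdiff t ht, ← hFTC, ← intervalIntegral.integral_const_mul]
    exact hmono
  -- Cauchy–Schwarz lower bound on κ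
  set q : ℝ → ℝ := fun σ => (f σ - f 0) ^ (γ-1) * deriv f σ with hq_def
  have hqc : ContinuousOn q (Set.Ioi 0) :=
    ((hfc.sub continuousOn_const).rpow_const (fun x hx => Or.inl (hft x hx).ne')).mul hf'c
  have hqsq : ∀ σ > (0:ℝ), q σ ^ 2 = g σ := by
    intro σ hσ
    simp only [hq_def, hg_def]
    rw [mul_pow, sq ((f σ - f 0) ^ (γ-1)), ← Real.rpow_add (hft σ hσ),
      show (γ-1)+(γ-1) = 2*γ-2 by ring]
  have hHd : ∀ σ ∈ Set.Ioi (0:ℝ), HasDerivAt (fun u => (f u - f 0)^γ / γ) (q σ) σ := by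
    intro σ hσ
    have h1 := ((hfd σ hσ).sub_const (f 0)).rpow_const (p := γ) (Or.inl (hft σ hσ).ne')
    have h2 := h1.div_const γ
    refine h2.congr_deriv ?_
    simp only [q]
    field_simp
  have hCS : ∀ t, T + 1 ≤ t →
      ((f t - f 0)^γ/γ - (f T - f 0)^γ/γ)^2 / (t - T) ≤ κ t - κ T := by
    intro t ht
    have htT : T < t := by linarith
    have hd : (0:ℝ) < t - T := by linarith
    have huIcc : Set.uIcc T t = Set.Icc T t := Set.uIcc_of_le htT.le
    have hsub : Set.Icc T t ⊆ Set.Ioi 0 := fun x hx => lt_of_lt_of_le hTpos hx.1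
    have hqint : IntervalIntegrable q MeasureTheory.volume T t :=
      (hqc.mono (huIcc ▸ hsub)).intervalIntegrable
    have hq2int : IntervalIntegrable (fun σ => q σ ^ 2) MeasureTheory.volume T t :=
      ((hqc.mono (huIcc ▸ hsub)).pow 2).intervalIntegrable
    set I := ∫ σ in T..t, q σ with hI_def
    set S := ∫ σ in T..t, q σ ^ 2 with hS_def
    have hIq : I = (f t - f 0)^γ/γ - (f T - f 0)^γ/γ :=
      intervalIntegral.integral_eq_sub_of_hasDerivAt
        (fun σ hσ => hHd σ (hsub (huIcc ▸ hσ))) hqint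
    have hnn : 0 ≤ ∫ σ in T..t, (q σ - I/(t-T))^2 :=
      intervalIntegral.integral_nonneg htT.le (fun σ _ => sq_nonneg _)
    have hexp : ∫ σ in T..t, (q σ - I/(t-T))^2
        = S - 2*(I/(t-T))*I + (I/(t-T))^2*(t-T) := by
      have heq : ∀ σ:ℝ, (q σ - I/(t-T))^2
          = q σ^2 - (2*(I/(t-T)))*q σ + (I/(t-T))^2 := fun σ => by ring
      simp_rw [heq]
      rw [intervalIntegral.integral_add ((hq2int.sub (hqint.const_mul _)))
          intervalIntegrable_const,
        intervalIntegral.integral_sub hq2int (hqint.const_mul _),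
        intervalIntegral.integral_const_mul, intervalIntegral.integral_const]
      rw [smul_eq_mul]
      ring
    have hratS : I^2/(t-T) ≤ S := by
      have h0 := hnn
      rw [hexp] at h0
      have e : S - 2*(I/(t-T))*I + (I/(t-T))^2*(t-T) = S - I^2/(t-T) := by
        field_simp
        ring
      rw [e] at h0
      linarith
    have hgq : κ t - κ T = S := by
      rw [hκdiff t (by linarith), hS_def]
      apply intervalIntegral.integral_congr
      intro σ hσ
      exact (hqsq σ (hsub (huIcc ▸ hσ))).symm
    rw [hgq, ← hIq]
    exact hratS
  -- superlinear growth of f t - f 0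
  have hsuper' : Tendsto (fun t => (f t - f 0) / t ^ (p-1)) atTop atTop := by
    have h1 : Tendsto (fun t:ℝ => -(f 0) / t^(p-1)) atTop (nhds 0) :=
      tendsto_const_nhds.div_atTop hrpowtop
    have hev : ∀ᶠ t:ℝ in atTop, (-1:ℝ) ≤ -f 0 / t^(p-1) :=
      h1.eventually (eventually_ge_nhds (by norm_num))
    have h2 : Tendsto (fun t:ℝ => f t / t^(p-1) + -f 0 / t^(p-1)) atTop atTop :=
      tendsto_atTop_add_right_of_le' atTop (-1:ℝ) hsuper hev
    apply h2.congr
    intro t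
    ring
  have hftge : ∀ᶠ t in atTop, t ^ (p-1) ≤ f t - f 0 := by
    filter_upwards [hsuper'.eventually_ge_atTop 1, eventually_gt_atTop 0] with t h1 h0
    rw [le_div_iff₀ (Real.rpow_pos_of_pos h0 _)] at h1
    linarith
  -- D tends to infinity
  have hHlb : ∀ᶠ t in atTop, t + (f T - f 0)^γ/γ ≤ (f t - f 0)^γ/γ := by
    have he : (0:ℝ) < (p-1)*γ - 1 := sub_pos.mpr hγp
    have hev2 : ∀ᶠ t in atTop,
        γ*(2 + |(f T - f 0)^γ/γ|) ≤ t ^ ((p-1)*γ - 1) :=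
      (tendsto_rpow_atTop he).eventually_ge_atTop _
    filter_upwards [hftge, hev2, eventually_ge_atTop 1] with t h1 h2 h3
    have h0 : (0:ℝ) < t := lt_of_lt_of_le one_pos h3
    have hstep : t ^ ((p-1)*γ) = t ^ ((p-1)*γ - 1) * t := by
      rw [← Real.rpow_add_one h0.ne']
      ring_nf
    have hmid : t + (f T - f 0)^γ/γ ≤ t ^ ((p-1)*γ)/γ := by
      rw [le_div_iff₀ hγpos, hstep]
      have hA1 : (t + (f T - f 0)^γ/γ)*γ ≤ (γ*(2 + |(f T - f 0)^γ/γ|))*t := by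
        have hX : 0 ≤ t + |(f T - f 0)^γ/γ| * t - (f T - f 0)^γ/γ := by
          nlinarith [le_abs_self ((f T - f 0)^γ/γ),
            mul_nonneg (abs_nonneg ((f T - f 0)^γ/γ)) (sub_nonneg.mpr h3)]
        nlinarith [mul_nonneg hγpos.le hX, h0]
      exact le_trans hA1 (mul_le_mul_of_nonneg_right h2 h0.le)
    refine le_trans hmid ?_
    apply div_le_div_of_nonneg_right ?_ hγpos.le
    · rw [Real.rpow_mul h0.le]
      exact Real.rpow_le_rpow (Real.rpow_nonneg h0.le _) h1 hγpos.le
  have hDge : ∀ᶠ t in atTop, D T + c' * t ≤ D t := by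
    filter_upwards [hHlb, eventually_ge_atTop (T+1)] with t h1 ht
    have hcs := hCS t ht
    have hk := hkey t (by linarith)
    have hd : (0:ℝ) < t - T := by linarith
    have htpos : (0:ℝ) < t := lt_of_lt_of_le (by linarith) ht
    have h4 : t ≤ ((f t - f 0)^γ/γ - (f T - f 0)^γ/γ)^2 / (t - T) := by
      have h5 : t^2 ≤ ((f t - f 0)^γ/γ - (f T - f 0)^γ/γ)^2 := by
        apply pow_le_pow_left₀ htpos.le (by linarith) 2
      have h6 : t^2/(t-T) ≥ t^2/t :=
        div_le_div_of_nonneg_left (sq_nonneg t) hd (by linarith)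
      have h7 : t^2/t = t := by
        field_simp
      calc t = t^2/t := h7.symm
        _ ≤ t^2/(t-T) := h6
        _ ≤ _ := div_le_div_of_nonneg_right h5 hd.le
    have h8 : c' * t ≤ c' * (κ t - κ T) :=
      mul_le_mul_of_nonneg_left (le_trans h4 hcs) hc'pos.le
    linarith
  have hDtop : Tendsto D atTop atTop := by
    apply tendsto_atTop_mono' atTop hDge
    exact tendsto_atTop_add_const_left _ _ (Tendsto.const_mul_atTop hc'pos tendsto_id)
  -- conclusion
  have hκnn : ∀ t, (0:ℝ) ≤ t → 0 ≤ κ t := by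
    intro t ht
    rw [hκ]
    apply intervalIntegral.integral_nonneg ht
    intro σ hσ
    apply mul_nonneg _ (sq_nonneg _)
    apply Real.rpow_nonneg
    have := hf_mono (Set.self_mem_Ici) (Set.mem_Ici.mpr hσ.1) hσ.1
    linarith
  set K := A * κ T - A * (D T) / c' with hK_def
  have hterm : Tendsto (fun t => K / D t) atTop (nhds 0) :=
    tendsto_const_nhds.div_atTop hDtop
  have hbound : ∀ᶠ t in atTop, A * κ t / D t ≤ A/c' + K / D t := by
    filter_upwards [eventually_ge_atTop T] with t ht
    have htpos : (0:ℝ) < t := lt_of_lt_of_le hTpos ht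
    have hDt := hDpos t htpos
    have hk := hkey t ht
    have h2 : A * κ t ≤ A/c' * D t + K := by
      have h3 := mul_le_mul_of_nonneg_left hk (le_of_lt (div_pos hApos hc'pos))
      have h4 : A/c' * (c' * (κ t - κ T)) = A * (κ t - κ T) := by
        rw [← mul_assoc, div_mul_cancel₀ _ hc'pos.ne']
      rw [h4] at h3
      rw [hK_def]
      have h5 : A/c' * (D t - D T) = A/c' * D t - A * D T / c' := by ring
      linarith [h5 ▸ h3]
    calc A * κ t / D t ≤ (A/c' * D t + K)/D t := by
          exact div_le_div_of_nonneg_right h2 hDt.le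
      _ = A/c' + K/D t := by rw [add_div, mul_div_assoc, div_self hDt.ne', mul_one]
  have hAc' : A / c' < 1 := (div_lt_one hc'pos).mpr hc'A
  set a := (A/c' + 1)/2 with ha_def
  have ha1 : a < 1 := by rw [ha_def]; linarith
  have haA : 0 < a - A/c' := by rw [ha_def]; linarith
  have h9 : ∀ᶠ t in atTop, A * κ t / D t ≤ a := by
    filter_upwards [hbound, hterm.eventually (eventually_lt_nhds haA)] with t h1 h2
    calc A * κ t / D t ≤ A/c' + K/D t := h1
      _ ≤ a := by linarith
  have hfinal : limsup (fun t => A * κ t / D t) atTop ≤ a := by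
    apply limsup_le_of_le _ h9
    apply Filter.IsBoundedUnder.isCoboundedUnder_le
    refine ⟨0, ?_⟩
    rw [eventually_map]
    filter_upwards [eventually_ge_atTop (1:ℝ)] with t ht
    have htpos : (0:ℝ) < t := lt_of_lt_of_le one_pos ht
    exact div_nonneg (mul_nonneg hApos.le (hκnn t htpos.le)) (hDpos t htpos).le
  exact lt_of_le_of_lt hfinal ha1
end

section
/- Let $f\in C^2((0,\infty))$ be positive with $f'(t)>0$ for $t>0$, and suppose $\tau:=\lim_{t\to\infty}\frac{f(t)f''(t)}{f'(t)^2}$ exists with $\tau<1$. Then for every $\varepsilon\in(0,1-\tau)$ there exists $c=c(\varepsilon)>0$ such that $f(t)\le c\,(1+t)^{\frac{1}{1-(\tau+\varepsilon)}}$ for all $t\ge 0$. -/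
open Real Filter

theorem stmt17 (τ ε : ℝ) (f : ℝ → ℝ) (hfC2 : ContDiffOn ℝ 2 f (Set.Ioi 0))
    (hf_pos : ∀ t > (0:ℝ), 0 < f t) (hf' : ∀ t > (0:ℝ), 0 < deriv f t)
    (hlim : Tendsto (fun t => f t * deriv (deriv f) t / (deriv f t) ^ 2) atTop (nhds τ))
    (hτ : τ < 1) (hε : 0 < ε) (hε' : ε < 1 - τ) :
    ∃ c > (0:ℝ), ∀ t ≥ (0:ℝ), f t ≤ c * (1 + t) ^ (1 / (1 - (τ + ε))) := by
  set β : ℝ := 1 - (τ + ε) with hβdef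
  set α : ℝ := 1 / β with hαdef
  have hβ : 0 < β := by rw [hβdef]; linarith
  have hα : 0 < α := by positivity
  have hαβ : α * β = 1 := by rw [hαdef, one_div, inv_mul_cancel₀ (ne_of_gt hβ)]
  -- eventual bound
  have hev : ∀ᶠ t in atTop, f t * deriv (deriv f) t / (deriv f t) ^ 2 < τ + ε :=
    hlim.eventually (eventually_lt_nhds (by linarith))
  obtain ⟨T₀, hT₀⟩ := eventually_atTop.mp hev
  set T : ℝ := max T₀ 1 with hTdef
  have hT1 : (1:ℝ) ≤ T := le_max_right _ _
  have hTpos : (0:ℝ) < T := by linarith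
  have hTmem : T ∈ Set.Ioi (0:ℝ) := hTpos
  have hsub : Set.Ici T ⊆ Set.Ioi (0:ℝ) := fun x hx => lt_of_lt_of_le hTpos hx
  have hopen : IsOpen (Set.Ioi (0:ℝ)) := isOpen_Ioi
  -- derivatives
  have hfd : ∀ x ∈ Set.Ioi (0:ℝ), HasDerivAt f (deriv f x) x := by
    intro x hx
    exact (((hfC2.differentiableOn (by norm_num)).differentiableAt
      (hopen.mem_nhds hx))).hasDerivAt
  have hC1 : ContDiffOn ℝ 1 (deriv f) (Set.Ioi 0) :=
    hfC2.deriv_of_isOpen hopen (by norm_num)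
  have hfd' : ∀ x ∈ Set.Ioi (0:ℝ), HasDerivAt (deriv f) (deriv (deriv f) x) x := by
    intro x hx
    exact (((hC1.differentiableOn (by norm_num)).differentiableAt
      (hopen.mem_nhds hx))).hasDerivAt
  set u : ℝ → ℝ := fun t => f t / deriv f t with hudef
  have hu_pos : ∀ x ∈ Set.Ioi (0:ℝ), 0 < u x := fun x hx =>
    div_pos (hf_pos x hx) (hf' x hx)
  have hu : ∀ x ∈ Set.Ioi (0:ℝ), HasDerivAt u
      ((deriv f x * deriv f x - f x * deriv (deriv f) x) / (deriv f x) ^ 2) x := by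
    intro x hx
    exact (hfd x hx).div (hfd' x hx) (ne_of_gt (hf' x hx))
  have hu_diff : DifferentiableOn ℝ u (Set.Ici T) := fun x hx =>
    ((hu x (hsub hx)).differentiableAt).differentiableWithinAt
  -- pointwise derivative lower bound
  have hkey : ∀ x, T ≤ x →
      β ≤ (deriv f x * deriv f x - f x * deriv (deriv f) x) / (deriv f x) ^ 2 := by
    intro x hx
    have hx0 : x ∈ Set.Ioi (0:ℝ) := hsub hx
    have h1 : f x * deriv (deriv f) x / (deriv f x) ^ 2 < τ + ε :=
      hT₀ x (le_trans (le_max_left _ _) hx)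
    have h2 : (deriv f x) ≠ 0 := ne_of_gt (hf' x hx0)
    have heq : (deriv f x * deriv f x - f x * deriv (deriv f) x) / (deriv f x) ^ 2
        = 1 - f x * deriv (deriv f) x / (deriv f x) ^ 2 := by
      field_simp
    rw [heq, hβdef]
    linarith
  -- Claim A : u grows at least linearly
  have hg : MonotoneOn (fun t => u t - β * t) (Set.Ici T) := by
    apply monotoneOn_of_deriv_nonneg (convex_Ici T)
    · exact hu_diff.continuousOn.sub ((continuous_const.mul continuous_id).continuousOn)
    · rw [interior_Ici]
      intro x hx
      exact (((hu x (hsub (Set.mem_Ici.mpr (le_of_lt hx)))).sub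
        ((hasDerivAt_id x).const_mul β)).differentiableAt).differentiableWithinAt
    · rw [interior_Ici]
      intro x hx
      have hx' : T ≤ x := le_of_lt hx
      have hd : HasDerivAt (fun t => u t - β * t)
          ((deriv f x * deriv f x - f x * deriv (deriv f) x) / deriv f x ^ 2 - β * 1) x := by
        simpa using (hu x (hsub hx')).fun_sub ((hasDerivAt_id x).const_mul β)
      rw [hd.deriv]
      have := hkey x hx'
      simp only [mul_one] at *
      linarith
  have claimA : ∀ t, T ≤ t → u T + β * (t - T) ≤ u t := by
    intro t ht
    have := hg Set.self_mem_Ici (Set.mem_Ici.mpr ht) ht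
    simp only at this
    linarith
  have huT : 0 < u T := hu_pos T hTmem
  have hv_pos : ∀ t, T ≤ t → 0 < u T + β * (t - T) := by
    intro t ht
    have : 0 ≤ β * (t - T) := mul_nonneg (le_of_lt hβ) (by linarith)
    linarith
  -- Claim B : monotonicity of ψ
  have hvd : ∀ x : ℝ, HasDerivAt (fun t => u T + β * (t - T)) β x := by
    intro x
    simpa using (((hasDerivAt_id x).sub_const T).const_mul β).const_add (u T)
  have hψ : MonotoneOn (fun t => α * Real.log (u T + β * (t - T)) - Real.log (f t))
      (Set.Ici T) := by
    apply monotoneOn_of_deriv_nonneg (convex_Ici T)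
    · apply ContinuousOn.sub
      · exact continuousOn_const.mul ((Continuous.continuousOn (by continuity)).log
          (fun x hx => ne_of_gt (hv_pos x hx)))
      · exact ContinuousOn.log
          (fun x hx => ((hfd x (hsub hx)).differentiableAt).continuousAt.continuousWithinAt)
          (fun x hx => ne_of_gt (hf_pos x (hsub hx)))
    · rw [interior_Ici]
      intro x hx
      have hx0 : x ∈ Set.Ioi (0:ℝ) := hsub (Set.mem_Ici.mpr (le_of_lt hx))
      have d1 := (((hvd x).log (ne_of_gt (hv_pos x (le_of_lt hx)))).const_mul α).sub
        ((hfd x hx0).log (ne_of_gt (hf_pos x hx0)))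
      exact d1.differentiableAt.differentiableWithinAt
    · rw [interior_Ici]
      intro x hx
      have hx' : T ≤ x := le_of_lt hx
      have hx0 : x ∈ Set.Ioi (0:ℝ) := hsub hx'
      have d1 := (((hvd x).log (ne_of_gt (hv_pos x hx'))).const_mul α).fun_sub
        ((hfd x hx0).log (ne_of_gt (hf_pos x hx0)))
      rw [d1.deriv]
      have hv := hv_pos x hx'
      have hfx := hf_pos x hx0
      have hfx' := hf' x hx0
      have hux := claimA x hx'
      have e1 : α * (β / (u T + β * (x - T))) = 1 / (u T + β * (x - T)) := by
        rw [← mul_div_assoc, hαβ]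
      have e2 : deriv f x / f x = 1 / u x := by
        rw [hudef, one_div_div]
      have e3 : 1 / u x ≤ 1 / (u T + β * (x - T)) :=
        one_div_le_one_div_of_le hv hux
      rw [e1, e2]
      linarith
  have hlog : ∀ t, T ≤ t → Real.log (f t) ≤
      Real.log (f T) + α * Real.log (u T + β * (t - T)) - α * Real.log (u T) := by
    intro t ht
    have h := hψ Set.self_mem_Ici (Set.mem_Ici.mpr ht) ht
    simp only [sub_self, mul_zero, add_zero] at h
    linarith
  -- convert to power bound for t ≥ T
  set C : ℝ := f T / (u T) ^ α * (u T + β) ^ α with hCdef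
  have hC : 0 < C := by
    apply mul_pos (div_pos (hf_pos T hTmem) (Real.rpow_pos_of_pos huT α))
      (Real.rpow_pos_of_pos (by linarith) α)
  have main : ∀ t, T ≤ t → f t ≤ C * (1 + t) ^ α := by
    intro t ht
    have hv := hv_pos t ht
    have hft := hf_pos t (hsub ht)
    have h1 : f t ≤ f T * (u T + β * (t - T)) ^ α / (u T) ^ α := by
      have := hlog t ht
      have h2 : f t = Real.exp (Real.log (f t)) := (Real.exp_log hft).symm
      rw [h2]
      have h3 : Real.exp (Real.log (f T) + α * Real.log (u T + β * (t - T))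
          - α * Real.log (u T))
          = f T * (u T + β * (t - T)) ^ α / (u T) ^ α := by
        rw [Real.exp_sub, Real.exp_add, Real.exp_log (hf_pos T hTmem),
          Real.rpow_def_of_pos hv, Real.rpow_def_of_pos huT, mul_comm α, mul_comm α]
      rw [← h3]
      exact Real.exp_le_exp.mpr this
    have h4 : (u T + β * (t - T)) ^ α ≤ (u T + β) ^ α * (1 + t) ^ α := by
      rw [← Real.mul_rpow (by linarith) (by linarith)]
      apply Real.rpow_le_rpow (le_of_lt hv) _ (le_of_lt hα)
      nlinarith
    calc f t ≤ f T * (u T + β * (t - T)) ^ α / (u T) ^ α := h1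
      _ = f T / (u T) ^ α * (u T + β * (t - T)) ^ α := by ring
      _ ≤ f T / (u T) ^ α * ((u T + β) ^ α * (1 + t) ^ α) := by
          exact mul_le_mul_of_nonneg_left h4
            (le_of_lt (div_pos (hf_pos T hTmem) (Real.rpow_pos_of_pos huT α)))
      _ = C * (1 + t) ^ α := by rw [hCdef]; ring
  -- monotonicity of f on (0, ∞)
  have hmono : StrictMonoOn f (Set.Ioi (0:ℝ)) := by
    apply strictMonoOn_of_deriv_pos (convex_Ioi 0) (hfC2.continuousOn)
    rw [interior_Ioi]
    exact hf'
  refine ⟨max (max (f 0) (f T)) C, lt_of_lt_of_le hC (le_max_right _ _), ?_⟩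
  intro t ht
  have hone : (1:ℝ) ≤ (1 + t) ^ α := by
    calc (1:ℝ) = 1 ^ α := (Real.one_rpow α).symm
      _ ≤ (1 + t) ^ α := Real.rpow_le_rpow zero_le_one (by linarith) (le_of_lt hα)
  have hcpos : 0 < max (max (f 0) (f T)) C := lt_of_lt_of_le hC (le_max_right _ _)
  rcases le_or_gt T t with hcase | hcase
  · calc f t ≤ C * (1 + t) ^ α := main t hcase
      _ ≤ max (max (f 0) (f T)) C * (1 + t) ^ α := by
          exact mul_le_mul_of_nonneg_right (le_max_right _ _)
            (Real.rpow_nonneg (by linarith) α)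
  · have hft : f t ≤ max (f 0) (f T) := by
      rcases eq_or_lt_of_le ht with h0 | h0
      · rw [← h0]; exact le_max_left _ _
      · exact le_trans (hmono.monotoneOn h0 hTmem (le_of_lt hcase)) (le_max_right _ _)
    calc f t ≤ max (f 0) (f T) := hft
      _ ≤ max (max (f 0) (f T)) C := le_max_left _ _
      _ = max (max (f 0) (f T)) C * 1 := (mul_one _).symm
      _ ≤ max (max (f 0) (f T)) C * (1 + t) ^ α := by
          exact mul_le_mul_of_nonneg_left hone (le_of_lt hcpos)
end
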